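/- If t is a factor of w of length 3 occurring at positions i and j (that is, w(i)w(i+1)w(i+2) = w(j)w(j+1)w(j+2)), then i ≡ j (mod 3). -/

import Mathlib

/-- The four-letter alphabet `A₄ = {1,2,3,4}`; the value `k : Fin 4` represents letter `k+1`. -/
abbrev A4 := Fin 4

/-- The morphism `f` on letters: `f(1)=121, f(2)=123, f(3)=141, f(4)=142`
(letters `1,2,3,4` encoded as `0,1,2,3`). -/
def fm : A4 → List A4
  | 0 => [0, 1, 0]
  | 1 => [0, 1, 2]
  | 2 => [0, 3, 0]
  | 3 => [0, 3, 1]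

/-- The morphism `f` extended to words by concatenation. -/
def fw (u : List A4) : List A4 := u.flatMap fm

/-- The fixed point `w` of `f` starting with the letter `1`: since `|f^k(1)| = 3^k` and each
`f^k(1)` is a prefix of `f^(k+1)(1)`, the `n`-th letter of `w` is the `n`-th letter of
`f^(n+1)(1)`. -/
def w (n : ℕ) : A4 := ((fw^[n + 1]) [0]).getD n 0

/-- The finite word `t` occurs at position `i` in the infinite word `x`. -/
def OccursAt {α : Type*} (t : List α) (x : ℕ → α) (i : ℕ) : Prop :=
  t = (List.range t.length).map fun k => x (i + k)

/-- The finite word `v` is a factor of the infinite word `x`. -/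
def FactorOf {α : Type*} (v : List α) (x : ℕ → α) : Prop :=
  ∃ i, OccursAt v x i

/-- The finite word `v` has period `q ≥ 1`: `v(j) = v(j+q)` whenever `0 ≤ j < |v| - q`. -/
def HasPeriod {α : Type*} (v : List α) (q : ℕ) : Prop :=
  1 ≤ q ∧ ∀ j, j + q < v.length → v[j]? = v[j + q]?

/-- A word lies in `ker ψ` if each letter of `A₄` occurs in it a number of times
divisible by `4`. -/
def InKerPsi (u : List A4) : Prop := ∀ a : A4, 4 ∣ u.count a

/-- `q` is a kernel period of `v`: `1 ≤ q ≤ |v|`, `v` has period `q`, and the prefix of `v`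
of length `q` lies in `ker ψ`. -/
def KernelPeriod (v : List A4) (q : ℕ) : Prop :=
  q ≤ v.length ∧ HasPeriod v q ∧ InKerPsi (v.take q)

lemma fw_length (u : List A4) : (fw u).length = 3 * u.length := by
  induction u with
  | nil => rfl
  | cons a us ih =>
    have hfa : (fm a).length = 3 := by fin_cases a <;> rfl
    show ((fm a ++ fw us).length) = _
    rw [List.length_append, hfa, ih, List.length_cons]
    ring

lemma fw_getD (u : List A4) (m : ℕ) (hm : m < 3 * u.length) :
    (fw u).getD m 0 = (fm (u.getD (m / 3) 0)).getD (m % 3) 0 := by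
  induction u generalizing m with
  | nil => simp at hm
  | cons a us ih =>
    have hfa : (fm a).length = 3 := by fin_cases a <;> rfl
    by_cases h3 : m < 3
    · have hd : m / 3 = 0 := by omega
      have hmod : m % 3 = m := by omega
      simp only [fw, List.flatMap_cons]
      rw [hd, hmod, List.getD_cons_zero, List.getD_append _ _ _ _ (by omega)]
    · have hm' : m - 3 < 3 * us.length := by simp [List.length_cons] at hm; omega
      have := ih (m - 3) hm'
      simp only [fw, List.flatMap_cons] at *
      rw [List.getD_append_right _ _ _ _ (by omega)]
      rw [hfa]
      rw [this]
      have h1 : m / 3 = (m - 3) / 3 + 1 := by omega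
      have h2 : m % 3 = (m - 3) % 3 := by omega
      rw [h1, ← h2]
      rfl

lemma iter_length (n : ℕ) : ((fw^[n]) [0]).length = 3 ^ n := by
  induction n with
  | zero => rfl
  | succ k ih => rw [Function.iterate_succ_apply', fw_length, ih]; ring

lemma w_eq (n : ℕ) : w n = (fm (((fw^[n]) [0]).getD (n / 3) 0)).getD (n % 3) 0 := by
  rw [w, Function.iterate_succ_apply']
  apply fw_getD
  rw [iter_length]
  calc n < 3 ^ n := Nat.lt_pow_self (by norm_num)
  _ ≤ 3 * 3 ^ n := by omega

lemma wA (n : ℕ) (hn : n % 3 = 0) : w n = 0 := by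
  rw [w_eq, hn]
  generalize ((fw^[n]) [0]).getD (n / 3) 0 = a
  fin_cases a <;> rfl

lemma wB (n : ℕ) (hn : n % 3 = 1) : w n ≠ 0 := by
  rw [w_eq, hn]
  generalize ((fw^[n]) [0]).getD (n / 3) 0 = a
  fin_cases a <;> decide

/-- If a factor of `w` of length `3` occurs at positions `i` and `j`, then `i ≡ j (mod 3)`. -/
theorem stmt8 (i j : ℕ) (h : ∀ k, k < 3 → w (i + k) = w (j + k)) : i % 3 = j % 3 := by
  have h0 : w i = w j := by simpa using h 0 (by norm_num)
  have h1 : w (i + 1) = w (j + 1) := h 1 (by norm_num)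
  have h2 : w (i + 2) = w (j + 2) := h 2 (by norm_num)
  have hi : i % 3 = 0 ∨ i % 3 = 1 ∨ i % 3 = 2 := by omega
  have hj : j % 3 = 0 ∨ j % 3 = 1 ∨ j % 3 = 2 := by omega
  rcases hi with hi | hi | hi <;> rcases hj with hj | hj | hj <;>
    first
    | omega
    | exact absurd (h0.symm.trans (wA i hi)) (wB j hj)
    | exact absurd (h0.trans (wA j hj)) (wB i hi)
    | exact absurd (h1.symm.trans (wA (i + 1) (by omega))) (wB (j + 1) (by omega))
    | exact absurd (h1.trans (wA (j + 1) (by omega))) (wB (i + 1) (by omega))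
    | exact absurd (h2.symm.trans (wA (i + 2) (by omega))) (wB (j + 2) (by omega))
    | exact absurd (h2.trans (wA (j + 2) (by omega))) (wB (i + 2) (by omega))
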